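/- arXiv:1505.04304 — 4 statements merged into one kernel-verified Lean document; each statement's English description precedes it below -/
import Mathlib

section
/- Let A and B be normal ideals of the pseudo MV-algebra M = Γ(G,u). Then the normal ideal generated by A ∪ B satisfies ⟨A ∪ B⟩_n = {x ∈ M : x ≤ a ⊕ b for some a ∈ A, b ∈ B} = {x ∈ M : x = a ⊕ b for some a ∈ A, b ∈ B} = A ⊕ B. -/
variable {G : Type*} [Lattice G] [AddGroup G]
  [CovariantClass G G (· + ·) (· ≤ ·)]
  [CovariantClass G G (Function.swap (· + ·)) (· ≤ ·)]

/-- `u` is a strong unit of the lattice-ordered group `G`. -/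
def IsStrongUnit (u : G) : Prop := 0 ≤ u ∧ ∀ x : G, ∃ n : ℕ, x ≤ n • u

/-- The operation `x ⊕ y := (x + y) ⊓ u` of the pseudo MV-algebra `Γ(G,u)`. -/
def oplus (u x y : G) : G := (x + y) ⊓ u

/-- The operation `x ⊙ y := (x - u + y) ⊔ 0` of the pseudo MV-algebra `Γ(G,u)`. -/
def odot (u x y : G) : G := (x - u + y) ⊔ 0

/-- `n.x := x ⊕ ⋯ ⊕ x` (`n` summands), with `0.x = 0`. -/
def nOplus (u : G) : ℕ → G → G
  | 0, _ => 0
  | n + 1, x => oplus u (nOplus u n x) x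

/-- `I` is an ideal of the pseudo MV-algebra with carrier `C ⊆ Γ(G,u)`:
a nonempty subset of `C`, downward closed within `C`, and closed under `⊕`. -/
def IsIdealIn (u : G) (C I : Set G) : Prop :=
  I ⊆ C ∧ I.Nonempty ∧ (∀ x ∈ I, ∀ y ∈ C, y ≤ x → y ∈ I) ∧
    ∀ x ∈ I, ∀ y ∈ I, oplus u x y ∈ I

/-- `I` is a normal ideal: `x ⊕ I = I ⊕ x` for all `x ∈ C`. -/
def IsNormalIdealIn (u : G) (C I : Set G) : Prop :=
  IsIdealIn u C I ∧ ∀ x ∈ C, (fun i => oplus u x i) '' I = (fun i => oplus u i x) '' I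

/-- `⟨X⟩_n`, the smallest normal ideal (of the carrier `C`) containing `X`. -/
def normalGenIn (u : G) (C X : Set G) : Set G :=
  ⋂₀ {I | IsNormalIdealIn u C I ∧ X ⊆ I}

/-- The polar `X^⊥ = {y ∈ C : y ∧ x = 0 for all x ∈ X}` computed in carrier `C`. -/
def polarIn (C X : Set G) : Set G := {y ∈ C | ∀ x ∈ X, y ⊓ x = 0}

/-- `A ⊕ B := {a ⊕ b : a ∈ A, b ∈ B}`. -/
def setOplus (u : G) (A B : Set G) : Set G := Set.image2 (oplus u) A B

/-- `↓a` computed within the carrier `C`. -/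
def dsetIn (C : Set G) (a : G) : Set G := {x ∈ C | x ≤ a}

/-- `I` is a summand-ideal of the carrier `C`: a normal ideal such that for
some normal ideal `J`, `I ∩ J = {0}` and `⟨I ∪ J⟩_n = C`. -/
def IsSummandIdealIn (u : G) (C I : Set G) : Prop :=
  IsNormalIdealIn u C I ∧ ∃ J, IsNormalIdealIn u C J ∧ I ∩ J = {0} ∧
    normalGenIn u C (I ∪ J) = C

/-- `I` is a polar ideal of the carrier `C`: `I = I^⊥⊥`. -/
def IsPolarIdealIn (C I : Set G) : Prop := polarIn C (polarIn C I) = I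

/-- `a` is a Boolean element of the carrier `C`: `a ∈ C` and `a ⊕ a = a`. -/
def IsBooleanIn (u : G) (C : Set G) (a : G) : Prop := a ∈ C ∧ oplus u a a = a

/-- The carrier `C` is strongly projectable: every polar ideal is a summand-ideal. -/
def IsStronglyProjectableIn (u : G) (C : Set G) : Prop :=
  ∀ I : Set G, IsPolarIdealIn C I → IsSummandIdealIn u C I

/-- `N` is a subalgebra of `Γ(G,u)`: contains `0` and `u`, closed under `⊕`,
`x⁻ = u - x` and `x∼ = -x + u`. -/
def IsSubalg (u : G) (N : Set G) : Prop :=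
  N ⊆ Set.Icc 0 u ∧ 0 ∈ N ∧ u ∈ N ∧
    (∀ x ∈ N, ∀ y ∈ N, oplus u x y ∈ N) ∧
    (∀ x ∈ N, u - x ∈ N) ∧ (∀ x ∈ N, -x + u ∈ N)

/-- `N` is a large subalgebra of `Γ(G,u)`: for every nonzero `y ∈ Γ(G,u)` there
are `n ∈ ℕ` and a nonzero `x ∈ N` with `x ≤ n.y`. -/
def IsLargeSubalg (u : G) (N : Set G) : Prop :=
  IsSubalg u N ∧ ∀ y ∈ Set.Icc (0 : G) u, y ≠ 0 →
    ∃ n : ℕ, ∃ x ∈ N, x ≠ 0 ∧ x ≤ nOplus u n y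


lemma oplus_mem_Icc {u : G} (hu0 : 0 ≤ u) {x y : G} (hx : x ∈ Set.Icc (0:G) u)
    (hy : y ∈ Set.Icc (0:G) u) : oplus u x y ∈ Set.Icc (0:G) u :=
  ⟨le_inf (add_nonneg hx.1 hy.1) hu0, inf_le_right⟩

lemma oplus_mono {u x y x' y' : G} (hx : x ≤ x') (hy : y ≤ y') :
    oplus u x y ≤ oplus u x' y' := inf_le_inf (add_le_add hx hy) le_rfl

lemma oplus_le {u x y : G} : oplus u x y ≤ x + y := inf_le_left

lemma oplus_zero_right {u x : G} (hx : x ≤ u) : oplus u x 0 = x := by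
  unfold oplus; rw [add_zero, inf_eq_left.2 hx]

lemma oplus_zero_left {u x : G} (hx : x ≤ u) : oplus u 0 x = x := by
  unfold oplus; rw [zero_add, inf_eq_left.2 hx]

lemma oplus_assoc' {u x y z : G} (hx : 0 ≤ x) (hz : 0 ≤ z) :
    oplus u (oplus u x y) z = oplus u x (oplus u y z) := by
  have h1 : oplus u (oplus u x y) z = (x + y + z) ⊓ u := by
    unfold oplus
    rw [inf_add, inf_assoc, inf_eq_right.2 (le_add_of_nonneg_right hz)]
  have h2 : oplus u x (oplus u y z) = (x + (y + z)) ⊓ u := by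
    unfold oplus
    rw [add_inf, inf_assoc, inf_eq_right.2 (le_add_of_nonneg_left hx)]
  rw [h1, h2, add_assoc]

lemma riesz {u a b x : G} (hx : x ∈ Set.Icc (0:G) u) (ha : 0 ≤ a) (hb : 0 ≤ b)
    (h : x ≤ a + b) :
    ∃ a₁ b₁ : G, a₁ ∈ Set.Icc (0:G) u ∧ b₁ ∈ Set.Icc (0:G) u ∧ a₁ ≤ a ∧ b₁ ≤ b ∧
      x = oplus u a₁ b₁ := by
  have h0 : 0 ≤ x ⊓ a := le_inf hx.1 ha
  refine ⟨x ⊓ a, -(x ⊓ a) + x,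
    ⟨h0, le_trans inf_le_left hx.2⟩, ⟨?_, ?_⟩, inf_le_right, ?_, ?_⟩
  · rw [le_neg_add_iff_add_le, add_zero]
    exact inf_le_left
  · calc -(x⊓a)+x ≤ 0 + x := add_le_add (neg_nonpos.2 h0) le_rfl
    _ = x := zero_add x
    _ ≤ u := hx.2
  · have heq : -(x⊓a)+x = 0 ⊔ (-a + x) := by
      rw [neg_inf, sup_add, neg_add_cancel]
    rw [heq]
    refine sup_le hb ?_
    rw [neg_add_le_iff_le_add]
    exact h
  · unfold oplus
    rw [add_neg_cancel_left, inf_eq_left.2 hx.2]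

theorem stmt0 (u : G) (hu : IsStrongUnit u) (A B : Set G)
    (hA : IsNormalIdealIn u (Set.Icc (0 : G) u) A)
    (hB : IsNormalIdealIn u (Set.Icc (0 : G) u) B) :
    normalGenIn u (Set.Icc (0 : G) u) (A ∪ B)
        = {x ∈ Set.Icc (0 : G) u | ∃ a ∈ A, ∃ b ∈ B, x ≤ oplus u a b} ∧
      normalGenIn u (Set.Icc (0 : G) u) (A ∪ B)
        = {x ∈ Set.Icc (0 : G) u | ∃ a ∈ A, ∃ b ∈ B, x = oplus u a b} ∧
      normalGenIn u (Set.Icc (0 : G) u) (A ∪ B) = setOplus u A B := by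
  obtain ⟨hu0, -⟩ := hu
  obtain ⟨⟨hAC, hAne, hAdc, hAop⟩, hAn⟩ := hA
  obtain ⟨⟨hBC, hBne, hBdc, hBop⟩, hBn⟩ := hB
  have h0C : (0:G) ∈ Set.Icc (0:G) u := ⟨le_rfl, hu0⟩
  have h0A : (0:G) ∈ A := by
    obtain ⟨a, ha⟩ := hAne; exact hAdc a ha 0 h0C (hAC ha).1
  have h0B : (0:G) ∈ B := by
    obtain ⟨b, hb⟩ := hBne; exact hBdc b hb 0 h0C (hBC hb).1
  -- normality helpers
  have hAswap : ∀ x ∈ Set.Icc (0:G) u, ∀ a ∈ A, ∃ a' ∈ A, oplus u a' x = oplus u x a := by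
    intro x hx a ha
    have h1 : oplus u x a ∈ (fun i => oplus u x i) '' A := ⟨a, ha, rfl⟩
    rw [hAn x hx] at h1
    obtain ⟨a', ha', h⟩ := h1
    exact ⟨a', ha', h⟩
  have hAswap' : ∀ x ∈ Set.Icc (0:G) u, ∀ a ∈ A, ∃ a' ∈ A, oplus u x a' = oplus u a x := by
    intro x hx a ha
    have h1 : oplus u a x ∈ (fun i => oplus u i x) '' A := ⟨a, ha, rfl⟩
    rw [← hAn x hx] at h1
    obtain ⟨a', ha', h⟩ := h1
    exact ⟨a', ha', h⟩
  have hBswap : ∀ x ∈ Set.Icc (0:G) u, ∀ b ∈ B, ∃ b' ∈ B, oplus u b' x = oplus u x b := by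
    intro x hx b hb
    have h1 : oplus u x b ∈ (fun i => oplus u x i) '' B := ⟨b, hb, rfl⟩
    rw [hBn x hx] at h1
    obtain ⟨b', hb', h⟩ := h1
    exact ⟨b', hb', h⟩
  have hBswap' : ∀ x ∈ Set.Icc (0:G) u, ∀ b ∈ B, ∃ b' ∈ B, oplus u x b' = oplus u b x := by
    intro x hx b hb
    have h1 : oplus u b x ∈ (fun i => oplus u i x) '' B := ⟨b, hb, rfl⟩
    rw [← hBn x hx] at h1
    obtain ⟨b', hb', h⟩ := h1
    exact ⟨b', hb', h⟩
  have hTC : setOplus u A B ⊆ Set.Icc (0:G) u := by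
    rintro _ ⟨a, ha, b, hb, rfl⟩
    exact oplus_mem_Icc hu0 (hAC ha) (hBC hb)
  have hAB_T : A ∪ B ⊆ setOplus u A B := by
    rintro x (hx | hx)
    · exact Set.mem_image2.2 ⟨x, hx, 0, h0B, oplus_zero_right (hAC hx).2⟩
    · exact Set.mem_image2.2 ⟨0, h0A, x, hx, oplus_zero_left (hBC hx).2⟩
  have hS_T : ∀ x ∈ Set.Icc (0:G) u, ∀ a ∈ A, ∀ b ∈ B, x ≤ oplus u a b →
      x ∈ setOplus u A B := by
    intro x hx a ha b hb hle
    obtain ⟨a₁, b₁, ha₁C, hb₁C, ha₁, hb₁, hxeq⟩ :=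
      riesz hx (hAC ha).1 (hBC hb).1 (hle.trans oplus_le)
    exact Set.mem_image2.2 ⟨a₁, hAdc a ha a₁ ha₁C ha₁, b₁, hBdc b hb b₁ hb₁C hb₁, hxeq.symm⟩
  have hTop : ∀ x ∈ setOplus u A B, ∀ y ∈ setOplus u A B,
      oplus u x y ∈ setOplus u A B := by
    rintro _ ⟨a, ha, b, hb, rfl⟩ _ ⟨a', ha', b', hb', rfl⟩
    obtain ⟨a₂, ha₂, h₂⟩ := hAswap b (hBC hb) a' ha'
    have key : oplus u (oplus u a b) (oplus u a' b')
        = oplus u (oplus u a a₂) (oplus u b b') := by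
      rw [oplus_assoc' (hAC ha).1 (oplus_mem_Icc hu0 (hAC ha') (hBC hb')).1,
          ← oplus_assoc' (hBC hb).1 (hBC hb').1, ← h₂,
          oplus_assoc' (hAC ha₂).1 (hBC hb').1,
          ← oplus_assoc' (hAC ha).1 (oplus_mem_Icc hu0 (hBC hb) (hBC hb')).1]
    rw [key]
    exact Set.mem_image2.2 ⟨_, hAop a ha a₂ ha₂, _, hBop b hb b' hb', rfl⟩
  have hTideal : IsIdealIn u (Set.Icc (0:G) u) (setOplus u A B) := by
    refine ⟨hTC, ⟨0, hAB_T (Or.inl h0A)⟩, ?_, hTop⟩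
    rintro _ ⟨a, ha, b, hb, rfl⟩ y hy hle
    exact hS_T y hy a ha b hb hle
  have hTn : ∀ x ∈ Set.Icc (0:G) u,
      (fun i => oplus u x i) '' (setOplus u A B)
        = (fun i => oplus u i x) '' (setOplus u A B) := by
    intro x hx
    ext z
    constructor
    · rintro ⟨_, ⟨a, ha, b, hb, rfl⟩, rfl⟩
      obtain ⟨a₁, ha₁, h₁⟩ := hAswap x hx a ha
      obtain ⟨b₁, hb₁, hb₁e⟩ := hBswap x hx b hb
      refine ⟨oplus u a₁ b₁, Set.mem_image2.2 ⟨a₁, ha₁, b₁, hb₁, rfl⟩, ?_⟩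
      show oplus u (oplus u a₁ b₁) x = oplus u x (oplus u a b)
      rw [oplus_assoc' (hAC ha₁).1 hx.1, hb₁e,
          ← oplus_assoc' (hAC ha₁).1 (hBC hb).1, h₁, oplus_assoc' hx.1 (hBC hb).1]
    · rintro ⟨_, ⟨a, ha, b, hb, rfl⟩, rfl⟩
      obtain ⟨a₂, ha₂, h₂⟩ := hAswap' x hx a ha
      obtain ⟨b₂, hb₂, h₃⟩ := hBswap' x hx b hb
      refine ⟨oplus u a₂ b₂, Set.mem_image2.2 ⟨a₂, ha₂, b₂, hb₂, rfl⟩, ?_⟩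
      show oplus u x (oplus u a₂ b₂) = oplus u (oplus u a b) x
      rw [← oplus_assoc' hx.1 (hBC hb₂).1, h₂,
          oplus_assoc' (hAC ha).1 (hBC hb₂).1, h₃, ← oplus_assoc' (hAC ha).1 hx.1]
  have hmin : ∀ I, IsNormalIdealIn u (Set.Icc (0:G) u) I → A ∪ B ⊆ I →
      setOplus u A B ⊆ I := by
    rintro I ⟨⟨hIC, -, -, hIop⟩, -⟩ hABI
    rintro _ ⟨a, ha, b, hb, rfl⟩
    exact hIop a (hABI (Or.inl ha)) b (hABI (Or.inr hb))
  have hgen : normalGenIn u (Set.Icc (0:G) u) (A ∪ B) = setOplus u A B := by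
    apply subset_antisymm
    · exact Set.sInter_subset_of_mem ⟨⟨hTideal, hTn⟩, hAB_T⟩
    · exact Set.subset_sInter (fun I hI => hmin I hI.1 hI.2)
  refine ⟨?_, ?_, hgen⟩
  · rw [hgen]; ext x
    constructor
    · rintro ⟨a, ha, b, hb, rfl⟩
      exact ⟨oplus_mem_Icc hu0 (hAC ha) (hBC hb), a, ha, b, hb, le_rfl⟩
    · rintro ⟨hxC, a, ha, b, hb, hle⟩
      exact hS_T x hxC a ha b hb hle
  · rw [hgen]; ext x
    constructor
    · rintro ⟨a, ha, b, hb, rfl⟩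
      exact ⟨oplus_mem_Icc hu0 (hAC ha) (hBC hb), a, ha, b, hb, rfl⟩
    · rintro ⟨hxC, a, ha, b, hb, rfl⟩
      exact Set.mem_image2.2 ⟨a, ha, b, hb, rfl⟩
end

section
/- If a is a Boolean element of the pseudo MV-algebra M = Γ(G,u) (i.e. a ⊕ a = a), then ↓a = {x ∈ M : x ≤ a} is a normal ideal of M. -/
variable {G : Type*} [Lattice G] [AddGroup G]
  [CovariantClass G G (· + ·) (· ≤ ·)]
  [CovariantClass G G (Function.swap (· + ·)) (· ≤ ·)]

set_option linter.unusedSectionVars false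

-- a ⊓ (u - a) = 0
lemma aux_haL (u a : G) (hB : (a + a) ⊓ u = a) : a ⊓ (u - a) = 0 := by
  have := congrArg (· - a) hB
  simpa [inf_add, sub_eq_add_neg, add_assoc] using this
-- a ⊓ (-a + u) = 0
lemma aux_haR (u a : G) (hB : (a + a) ⊓ u = a) : a ⊓ (-a + u) = 0 := by
  have := congrArg (-a + ·) hB
  simpa [add_inf, ← add_assoc] using this

-- (a + x) ⊓ u ≤ a ⊔ x, using a ⊓ (u - a) = 0
lemma aux_left (u a x : G) (hB : (a + a) ⊓ u = a) : (a + x) ⊓ u ≤ a ⊔ x := by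
  set t := (a + x) ⊓ u with ht
  have h1 : t - x ≤ a := by
    have : t ≤ a + x := inf_le_left
    simpa [sub_eq_add_neg] using add_le_add_right this (-x)
  have h2 : t - a ≤ u - a := by
    have : t ≤ u := inf_le_right
    exact sub_le_sub_right this a
  have h3 : (t - a) ⊓ (t - x) ≤ 0 := by
    calc (t - a) ⊓ (t - x) ≤ (u - a) ⊓ a := inf_le_inf h2 h1
    _ = a ⊓ (u - a) := inf_comm _ _
    _ = 0 := aux_haL u a hB
  have h4 : t - (a ⊔ x) ≤ 0 := by
    rw [sub_eq_add_neg, neg_sup, add_inf, ← sub_eq_add_neg, ← sub_eq_add_neg]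
    exact h3
  exact sub_nonpos.mp h4

-- (x + a) ⊓ u ≤ a ⊔ x, using a ⊓ (-a + u) = 0
lemma aux_right (u a x : G) (hB : (a + a) ⊓ u = a) : (x + a) ⊓ u ≤ a ⊔ x := by
  set t := (x + a) ⊓ u with ht
  have h1 : -x + t ≤ a := by
    have : t ≤ x + a := inf_le_left
    simpa [← add_assoc] using add_le_add_left this (-x)
  have h2 : -a + t ≤ -a + u := add_le_add_right inf_le_right _
  have h3 : (-a + t) ⊓ (-x + t) ≤ 0 := by
    calc (-a + t) ⊓ (-x + t) ≤ (-a + u) ⊓ a := inf_le_inf h2 h1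
    _ = a ⊓ (-a + u) := inf_comm _ _
    _ = 0 := aux_haR u a hB
  have h4 : -(a ⊔ x) + t ≤ 0 := by
    rw [neg_sup, inf_add]
    exact h3
  have := add_le_add_left h4 (a ⊔ x)
  simpa [← add_assoc] using this

theorem stmt1 (u : G) (hu : IsStrongUnit u) (a : G)
    (ha : IsBooleanIn u (Set.Icc (0 : G) u) a) :
    IsNormalIdealIn u (Set.Icc (0 : G) u) (dsetIn (Set.Icc (0 : G) u) a) := by
  obtain ⟨⟨ha0, hau⟩, hB⟩ := ha
  have hB' : (a + a) ⊓ u = a := hB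
  constructor
  · refine ⟨fun x hx => hx.1, ⟨0, ⟨le_refl 0, hu.1⟩, ha0⟩, fun x hx y hy hyx => ⟨hy, hyx.trans hx.2⟩, ?_⟩
    intro x hx y hy
    refine ⟨⟨le_inf (add_nonneg hx.1.1 hy.1.1) hu.1, inf_le_right⟩, ?_⟩
    calc (x + y) ⊓ u ≤ (a + a) ⊓ u := inf_le_inf_right u (add_le_add hx.2 hy.2)
    _ = a := hB'
  · intro x hx
    ext y
    simp only [Set.mem_image]
    constructor
    · rintro ⟨i, ⟨⟨hi0, hiu⟩, hia⟩, rfl⟩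
      refine ⟨((x + i) ⊓ u) - x, ⟨⟨?_, ?_⟩, ?_⟩, ?_⟩
      · rw [sub_nonneg]
        exact le_inf (le_add_of_nonneg_right hi0) hx.2
      · exact sub_le_iff_le_add.mpr (inf_le_right.trans (le_add_of_nonneg_right hx.1))
      · rw [sub_le_iff_le_add]
        calc (x + i) ⊓ u ≤ (x + a) ⊓ u := inf_le_inf_right u (add_le_add_right hia x)
        _ ≤ a ⊔ x := aux_right u a x hB'
        _ ≤ a + x := sup_le (le_add_of_nonneg_right hx.1) (le_add_of_nonneg_left ha0)
      · show ((x + i) ⊓ u - x + x) ⊓ u = oplus u x i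
        rw [sub_add_cancel]
        rw [oplus]; exact inf_eq_left.mpr inf_le_right
    · rintro ⟨j, ⟨⟨hj0, hju⟩, hja⟩, rfl⟩
      refine ⟨-x + ((j + x) ⊓ u), ⟨⟨?_, ?_⟩, ?_⟩, ?_⟩
      · rw [le_neg_add_iff_add_le, add_zero]
        exact le_inf (le_add_of_nonneg_left hj0) hx.2
      · rw [neg_add_le_iff_le_add]
        exact inf_le_right.trans (le_add_of_nonneg_left hx.1)
      · rw [neg_add_le_iff_le_add]
        calc (j + x) ⊓ u ≤ (a + x) ⊓ u := inf_le_inf_right u (add_le_add_left hja x)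
        _ ≤ a ⊔ x := aux_left u a x hB'
        _ ≤ x + a := sup_le (le_add_of_nonneg_left hx.1) (le_add_of_nonneg_right ha0)
      · show (x + (-x + ((j + x) ⊓ u))) ⊓ u = oplus u j x
        rw [← add_assoc, add_neg_cancel, zero_add]
        rw [oplus]; exact inf_eq_left.mpr inf_le_right
end

section
/- Let A be a summand-ideal of the pseudo MV-algebra M = Γ(G,u), so that M = A ⊞ B for some normal ideal B of M. Then M = A ⊕ B and B = A^⊥. -/
variable {G : Type*} [Lattice G] [AddGroup G]
  [CovariantClass G G (· + ·) (· ≤ ·)]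
  [CovariantClass G G (Function.swap (· + ·)) (· ≤ ·)]

lemma myNegLe {a b : G} (h : a ≤ b) : -b ≤ -a := by
  have h1 : -b + a ≤ 0 := by
    have := add_le_add_left h (-b)
    simpa using this
  have h2 : -b + a + -a ≤ 0 + -a := add_le_add h1 le_rfl
  simpa [add_assoc] using h2

lemma myNegInf (a b : G) : -(a ⊓ b) = -a ⊔ -b := by
  apply le_antisymm
  · rw [← neg_neg (-a ⊔ -b)]
    apply myNegLe
    exact le_inf (by simpa using myNegLe (le_sup_left (a := -a) (b := -b)))
      (by simpa using myNegLe (le_sup_right (a := -a) (b := -b)))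
  · exact sup_le (myNegLe inf_le_left) (myNegLe inf_le_right)

lemma mySupId (x y : G) : x + -(x ⊓ y) + y = y ⊔ x := by
  rw [myNegInf, add_sup, add_neg_cancel, sup_add, zero_add, add_assoc, neg_add_cancel, add_zero]

lemma myAddEqSup {a b : G} (h : a ⊓ b = 0) : a + b = b ⊔ a := by
  have := mySupId a b; rw [h] at this; simpa using this

lemma myCommOfInf {a b : G} (h : a ⊓ b = 0) : a + b = b + a := by
  have h1 : a + b = b ⊔ a := myAddEqSup h
  have h2 : b + a = a ⊔ b := myAddEqSup (by rw [inf_comm]; exact h)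
  rw [h1, h2, sup_comm]

lemma myOplusAssoc (u : G) {x z : G} (y : G) (hx : 0 ≤ x) (hz : 0 ≤ z) :
    oplus u (oplus u x y) z = oplus u x (oplus u y z) := by
  unfold oplus
  rw [inf_add, add_inf, inf_assoc, inf_assoc,
    inf_eq_right.mpr (le_add_of_nonneg_right hz),
    inf_eq_right.mpr (le_add_of_nonneg_left hx), ← add_assoc]

lemma mySubAdd (u : G) {x y : G} (hx : 0 ≤ x) (hy : 0 ≤ y) (hu : 0 ≤ u) :
    (x + y) ⊓ u ≤ (x ⊓ u) + (y ⊓ u) := by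
  rw [add_inf]
  refine le_inf ?_ ?_
  · rw [inf_add]
    exact le_inf inf_le_left (le_trans inf_le_right (le_add_of_nonneg_right hy))
  · exact le_trans inf_le_right (le_add_of_nonneg_left (le_inf hx hu))

theorem stmt2 (u : G) (hu : IsStrongUnit u) (A B : Set G)
    (hA : IsNormalIdealIn u (Set.Icc (0 : G) u) A)
    (hB : IsNormalIdealIn u (Set.Icc (0 : G) u) B)
    (hdisj : A ∩ B = {0})
    (hgen : normalGenIn u (Set.Icc (0 : G) u) (A ∪ B) = Set.Icc (0 : G) u) :
    setOplus u A B = Set.Icc (0 : G) u ∧ B = polarIn (Set.Icc (0 : G) u) A := by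
  obtain ⟨⟨hAsub, hAne, hAdc, hAcl⟩, hAnorm⟩ := hA
  obtain ⟨⟨hBsub, hBne, hBdc, hBcl⟩, hBnorm⟩ := hB
  have hu0 : (0:G) ≤ u := hu.1
  set C := Set.Icc (0:G) u with hCdef
  set S := setOplus u A B with hSdef
  have memC : ∀ x, x ∈ C ↔ 0 ≤ x ∧ x ≤ u := fun x => Set.mem_Icc
  have h0C : (0:G) ∈ C := (memC 0).mpr ⟨le_refl 0, hu0⟩
  have h0A : (0:G) ∈ A := by
    obtain ⟨a, ha⟩ := hAne
    exact hAdc a ha 0 h0C ((memC a).mp (hAsub ha)).1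
  have h0B : (0:G) ∈ B := by
    obtain ⟨b, hb⟩ := hBne
    exact hBdc b hb 0 h0C ((memC b).mp (hBsub hb)).1
  have hdisj' : ∀ a ∈ A, ∀ b ∈ B, a ⊓ b = 0 := by
    intro a ha b hb
    have ha' := (memC a).mp (hAsub ha)
    have hb' := (memC b).mp (hBsub hb)
    have hmem : a ⊓ b ∈ C := (memC _).mpr ⟨le_inf ha'.1 hb'.1, le_trans inf_le_left ha'.2⟩
    have h1 : a ⊓ b ∈ A := hAdc a ha _ hmem inf_le_left
    have h2 : a ⊓ b ∈ B := hBdc b hb _ hmem inf_le_right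
    have : a ⊓ b ∈ A ∩ B := ⟨h1, h2⟩
    rw [hdisj] at this; exact this
  have hoC : ∀ x ∈ C, ∀ y ∈ C, oplus u x y ∈ C := by
    intro x hx y hy
    exact (memC _).mpr ⟨le_inf (add_nonneg ((memC x).mp hx).1 ((memC y).mp hy).1) hu0,
      inf_le_right⟩
  have memS : ∀ a ∈ A, ∀ b ∈ B, oplus u a b ∈ S := by
    intro a ha b hb
    exact ⟨a, ha, b, hb, rfl⟩
  have memS' : ∀ s ∈ S, ∃ a ∈ A, ∃ b ∈ B, oplus u a b = s := by
    intro s hs; exact hs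
  have hSsub : S ⊆ C := by
    rintro s hs
    obtain ⟨a, ha, b, hb, rfl⟩ := memS' s hs
    exact hoC a (hAsub ha) b (hBsub hb)
  -- downward closure (Riesz decomposition)
  have hSdc : ∀ s ∈ S, ∀ y ∈ C, y ≤ s → y ∈ S := by
    intro s hs y hy hle
    obtain ⟨a, ha, b, hb, rfl⟩ := memS' s hs
    have hyC := (memC y).mp hy
    have haC := (memC a).mp (hAsub ha)
    have hbC := (memC b).mp (hBsub hb)
    have hyab : y ≤ a + b := le_trans hle inf_le_left
    have ha'A : y ⊓ a ∈ A :=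
      hAdc a ha _ ((memC _).mpr ⟨le_inf hyC.1 haC.1, le_trans inf_le_left hyC.2⟩) inf_le_right
    have hb'eq : -(y ⊓ a) + y = 0 ⊔ (-a + y) := by
      rw [myNegInf, sup_add, neg_add_cancel]
    have hb'le : -(y ⊓ a) + y ≤ b := by
      rw [hb'eq]
      refine sup_le hbC.1 ?_
      have := add_le_add_left hyab (-a)
      simpa using this
    have hb'0 : (0:G) ≤ -(y ⊓ a) + y := by rw [hb'eq]; exact le_sup_left
    have hb'B : -(y ⊓ a) + y ∈ B :=
      hBdc b hb _ ((memC _).mpr ⟨hb'0, le_trans hb'le hbC.2⟩) hb'le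
    have hfin : oplus u (y ⊓ a) (-(y ⊓ a) + y) = y := by
      unfold oplus
      rw [← add_assoc, add_neg_cancel, zero_add, inf_eq_left.mpr hyC.2]
    exact ⟨y ⊓ a, ha'A, -(y ⊓ a) + y, hb'B, hfin⟩
  -- closure under ⊕
  have hScl : ∀ s₁ ∈ S, ∀ s₂ ∈ S, oplus u s₁ s₂ ∈ S := by
    intro s₁ hs₁ s₂ hs₂
    obtain ⟨a₁, ha₁, b₁, hb₁, rfl⟩ := memS' s₁ hs₁
    obtain ⟨a₂, ha₂, b₂, hb₂, rfl⟩ := memS' s₂ hs₂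
    have hcomm : b₁ + a₂ = a₂ + b₁ := (myCommOfInf (hdisj' a₂ ha₂ b₁ hb₁)).symm
    have ha₁C := (memC a₁).mp (hAsub ha₁); have hb₁C := (memC b₁).mp (hBsub hb₁)
    have ha₂C := (memC a₂).mp (hAsub ha₂); have hb₂C := (memC b₂).mp (hBsub hb₂)
    have e : a₁ + b₁ + (a₂ + b₂) = a₁ + a₂ + (b₁ + b₂) := by
      rw [← add_assoc, add_assoc a₁ b₁ a₂, hcomm, ← add_assoc, add_assoc]
    have key : oplus u (oplus u a₁ b₁) (oplus u a₂ b₂)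
        ≤ oplus u (oplus u a₁ a₂) (oplus u b₁ b₂) := by
      unfold oplus
      have h1 : (a₁ + b₁) ⊓ u + (a₂ + b₂) ⊓ u ≤ a₁ + a₂ + (b₁ + b₂) := by
        rw [← e]; exact add_le_add inf_le_left inf_le_left
      calc ((a₁ + b₁) ⊓ u + (a₂ + b₂) ⊓ u) ⊓ u
          ≤ (a₁ + a₂ + (b₁ + b₂)) ⊓ u := inf_le_inf_right u h1
        _ ≤ ((a₁ + a₂) ⊓ u + (b₁ + b₂) ⊓ u) ⊓ u :=
            le_inf (mySubAdd u (add_nonneg ha₁C.1 ha₂C.1)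
              (add_nonneg hb₁C.1 hb₂C.1) hu0) inf_le_right
    exact hSdc _ (memS _ (hAcl a₁ ha₁ a₂ ha₂) _ (hBcl b₁ hb₁ b₂ hb₂)) _
      (hoC _ (hSsub hs₁) _ (hSsub hs₂)) key
  have hSne : S.Nonempty := by
    refine ⟨0, 0, h0A, 0, h0B, ?_⟩
    unfold oplus
    rw [add_zero, inf_eq_left.mpr hu0]
  have hAS : A ⊆ S := by
    intro a ha
    refine ⟨a, ha, 0, h0B, ?_⟩
    unfold oplus
    rw [add_zero, inf_eq_left.mpr ((memC a).mp (hAsub ha)).2]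
  have hBS : B ⊆ S := by
    intro b hb
    refine ⟨0, h0A, b, hb, ?_⟩
    unfold oplus
    rw [zero_add, inf_eq_left.mpr ((memC b).mp (hBsub hb)).2]
  -- elementwise normality of A and B
  have hAn1 : ∀ x ∈ C, ∀ a ∈ A, ∃ a' ∈ A, oplus u x a = oplus u a' x := by
    intro x hx a ha
    have h : oplus u x a ∈ (fun i => oplus u i x) '' A := by
      rw [← hAnorm x hx]; exact ⟨a, ha, rfl⟩
    obtain ⟨a', ha', he⟩ := h
    exact ⟨a', ha', he.symm⟩
  have hAn2 : ∀ x ∈ C, ∀ a ∈ A, ∃ a' ∈ A, oplus u a x = oplus u x a' := by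
    intro x hx a ha
    have h : oplus u a x ∈ (fun i => oplus u x i) '' A := by
      rw [hAnorm x hx]; exact ⟨a, ha, rfl⟩
    obtain ⟨a', ha', he⟩ := h
    exact ⟨a', ha', he.symm⟩
  have hBn1 : ∀ x ∈ C, ∀ b ∈ B, ∃ b' ∈ B, oplus u x b = oplus u b' x := by
    intro x hx b hb
    have h : oplus u x b ∈ (fun i => oplus u i x) '' B := by
      rw [← hBnorm x hx]; exact ⟨b, hb, rfl⟩
    obtain ⟨b', hb', he⟩ := h
    exact ⟨b', hb', he.symm⟩
  have hBn2 : ∀ x ∈ C, ∀ b ∈ B, ∃ b' ∈ B, oplus u b x = oplus u x b' := by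
    intro x hx b hb
    have h : oplus u b x ∈ (fun i => oplus u x i) '' B := by
      rw [hBnorm x hx]; exact ⟨b, hb, rfl⟩
    obtain ⟨b', hb', he⟩ := h
    exact ⟨b', hb', he.symm⟩
  -- normality of S
  have hSnorm : ∀ x ∈ C, (fun i => oplus u x i) '' S = (fun i => oplus u i x) '' S := by
    intro x hx
    have hxC := (memC x).mp hx
    ext y
    constructor
    · rintro ⟨s, hs, rfl⟩
      obtain ⟨a, ha, b, hb, rfl⟩ := memS' s hs
      obtain ⟨a', ha', hea⟩ := hAn1 x hx a ha
      obtain ⟨b', hb', heb⟩ := hBn1 x hx b hb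
      refine ⟨oplus u a' b', memS a' ha' b' hb', ?_⟩
      have ha'C := (memC a').mp (hAsub ha')
      have hbC := (memC b).mp (hBsub hb)
      show oplus u (oplus u a' b') x = oplus u x (oplus u a b)
      calc oplus u (oplus u a' b') x = oplus u a' (oplus u b' x) :=
            myOplusAssoc u b' ha'C.1 hxC.1
        _ = oplus u a' (oplus u x b) := by rw [← heb]
        _ = oplus u (oplus u a' x) b := (myOplusAssoc u x ha'C.1 hbC.1).symm
        _ = oplus u (oplus u x a) b := by rw [← hea]
        _ = oplus u x (oplus u a b) := myOplusAssoc u a hxC.1 hbC.1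
    · rintro ⟨s, hs, rfl⟩
      obtain ⟨a, ha, b, hb, rfl⟩ := memS' s hs
      obtain ⟨a', ha', hea⟩ := hAn2 x hx a ha
      obtain ⟨b', hb', heb⟩ := hBn2 x hx b hb
      refine ⟨oplus u a' b', memS a' ha' b' hb', ?_⟩
      have haC := (memC a).mp (hAsub ha)
      have hb'C := (memC b').mp (hBsub hb')
      show oplus u x (oplus u a' b') = oplus u (oplus u a b) x
      calc oplus u x (oplus u a' b') = oplus u (oplus u x a') b' :=
            (myOplusAssoc u a' hxC.1 hb'C.1).symm
        _ = oplus u (oplus u a x) b' := by rw [← hea]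
        _ = oplus u a (oplus u x b') := myOplusAssoc u x haC.1 hb'C.1
        _ = oplus u a (oplus u b x) := by rw [← heb]
        _ = oplus u (oplus u a b) x := (myOplusAssoc u b haC.1 hxC.1).symm
  have hSnormal : IsNormalIdealIn u C S :=
    ⟨⟨hSsub, hSne, fun s hs y hy hle => hSdc s hs y hy hle, hScl⟩, hSnorm⟩
  have hCS : C ⊆ S := by
    intro x hx
    rw [← hgen] at hx
    exact hx S ⟨hSnormal, Set.union_subset hAS hBS⟩
  have part1 : S = C := Set.Subset.antisymm hSsub hCS
  refine ⟨part1, ?_⟩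
  apply Set.Subset.antisymm
  · intro b hb
    exact ⟨hBsub hb, fun a ha => by rw [inf_comm]; exact hdisj' a ha b hb⟩
  · intro y hy
    obtain ⟨hyC, hpol⟩ := hy
    have hyS : y ∈ S := hCS hyC
    obtain ⟨a, ha, b, hb, heq⟩ := memS' y hyS
    have hbC := (memC b).mp (hBsub hb)
    have hay : a ≤ y := by
      rw [← heq]
      exact le_inf (le_add_of_nonneg_right hbC.1) ((memC a).mp (hAsub ha)).2
    have ha0 : a = 0 := by
      have h1 : y ⊓ a = a := inf_eq_right.mpr hay
      rw [hpol a ha] at h1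
      exact h1.symm
    rw [ha0] at heq
    have : oplus u 0 b = b := by
      unfold oplus; rw [zero_add, inf_eq_left.mpr hbC.2]
    rw [this] at heq
    rw [← heq]; exact hb
end

section
/- If A is a summand-ideal of the pseudo MV-algebra M = Γ(G,u), then every normal ideal I of M satisfies I = (A ∩ I) ⊕ (I ∩ A^⊥). -/
variable {G : Type*} [Lattice G] [AddGroup G]
  [CovariantClass G G (· + ·) (· ≤ ·)]
  [CovariantClass G G (Function.swap (· + ·)) (· ≤ ·)]

/-- Orthogonal elements have sum equal to sup. -/
lemma orth_add_eq_sup' (a b : G) (h : a ⊓ b = 0) : a + b = a ⊔ b := by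
  have key : a + (-(a ⊓ b) + b) = b ⊔ a := by
    rw [neg_inf, sup_add, add_sup]; simp [sup_comm]
  rw [h, neg_zero, zero_add] at key
  rw [key, sup_comm]

/-- Orthogonal elements commute. -/
lemma orth_add_comm' (a b : G) (h : a ⊓ b = 0) : a + b = b + a := by
  rw [orth_add_eq_sup' a b h, orth_add_eq_sup' b a (by rw [inf_comm, h]), sup_comm]

lemma trunc_left' (u x t : G) (hx : 0 ≤ x) : (x + t ⊓ u) ⊓ u = (x + t) ⊓ u := by
  rw [add_inf, inf_assoc]
  congr 1
  rw [inf_eq_right]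
  calc u = 0 + u := by rw [zero_add]
  _ ≤ x + u := add_le_add_left hx u

lemma trunc_right' (u x t : G) (hx : 0 ≤ x) : (t ⊓ u + x) ⊓ u = (t + x) ⊓ u := by
  rw [inf_add, inf_assoc]
  congr 1
  rw [inf_eq_right]
  calc u = u + 0 := by rw [add_zero]
  _ ≤ u + x := add_le_add_right hx u

theorem stmt4 (u : G) (hu : IsStrongUnit u) (A : Set G)
    (hA : IsSummandIdealIn u (Set.Icc (0 : G) u) A)
    (I : Set G) (hI : IsNormalIdealIn u (Set.Icc (0 : G) u) I) :
    I = setOplus u (A ∩ I) (I ∩ polarIn (Set.Icc (0 : G) u) A) := by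
  obtain ⟨⟨⟨hAsub, hAne, hAdc, hAop⟩, hAnorm⟩, J, ⟨⟨hJsub, hJne, hJdc, hJop⟩, hJnorm⟩,
    hAJ, hgen⟩ := hA
  obtain ⟨⟨hIsub, hIne, hIdc, hIop⟩, _⟩ := hI
  set C := Set.Icc (0 : G) u with hCdef
  have hu0 : (0 : G) ≤ u := hu.1
  have h0C : (0 : G) ∈ C := Set.mem_Icc.mpr ⟨le_refl 0, hu0⟩
  have memC : ∀ {x : G}, x ∈ C → 0 ≤ x ∧ x ≤ u := fun h => Set.mem_Icc.mp h
  have h0A : (0 : G) ∈ A := by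
    obtain ⟨x, hx⟩ := hAne; exact hAdc x hx 0 h0C (memC (hAsub hx)).1
  have h0J : (0 : G) ∈ J := by
    obtain ⟨x, hx⟩ := hJne; exact hJdc x hx 0 h0C (memC (hJsub hx)).1
  -- orthogonality of A and J
  have horth : ∀ a ∈ A, ∀ b ∈ J, a ⊓ b = 0 := by
    intro a ha b hb
    have h1 : a ⊓ b ∈ C := Set.mem_Icc.mpr
      ⟨le_inf (memC (hAsub ha)).1 (memC (hJsub hb)).1,
        le_trans inf_le_left (memC (hAsub ha)).2⟩
    have h2 : a ⊓ b ∈ A ∩ J :=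
      ⟨hAdc a ha _ h1 inf_le_left, hJdc b hb _ h1 inf_le_right⟩
    rw [hAJ] at h2
    exact Set.mem_singleton_iff.mp h2
  set K := setOplus u A J with hKdef
  have hmemK : ∀ a ∈ A, ∀ b ∈ J, oplus u a b ∈ K := by
    intro a ha b hb; exact ⟨a, ha, b, hb, rfl⟩
  have hKsub : K ⊆ C := by
    rintro k ⟨a, ha, b, hb, rfl⟩
    exact Set.mem_Icc.mpr
      ⟨le_inf (add_nonneg (memC (hAsub ha)).1 (memC (hJsub hb)).1) hu0, inf_le_right⟩
  have hoplus0 : ∀ a : G, a ≤ u → oplus u a 0 = a := by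
    intro a hau; show (a + 0) ⊓ u = a; rw [add_zero, inf_eq_left.mpr hau]
  have h0oplus : ∀ a : G, a ≤ u → oplus u 0 a = a := by
    intro a hau; show (0 + a) ⊓ u = a; rw [zero_add, inf_eq_left.mpr hau]
  have hAJK : A ∪ J ⊆ K := by
    rintro x (hx | hx)
    · have := hmemK x hx 0 h0J
      rwa [hoplus0 x (memC (hAsub hx)).2] at this
    · have := hmemK 0 h0A x hx
      rwa [h0oplus x (memC (hJsub hx)).2] at this
  -- the key computation : oplus u (a ⊕ b) x and oplus u x (a ⊕ b) as truncated sums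
  have hcompL : ∀ x s t : G, 0 ≤ x → oplus u x (oplus u s t) = (x + (s + t)) ⊓ u := by
    intro x s t hx; show (x + (s + t) ⊓ u) ⊓ u = _; exact trunc_left' u x (s + t) hx
  have hcompR : ∀ x s t : G, 0 ≤ x → oplus u (oplus u s t) x = (s + t + x) ⊓ u := by
    intro x s t hx; show ((s + t) ⊓ u + x) ⊓ u = _; exact trunc_right' u x (s + t) hx
  -- K is a normal ideal
  have hKideal : IsIdealIn u C K := by
    refine ⟨hKsub, ⟨0, hAJK (Or.inl h0A)⟩, ?_, ?_⟩
    · -- downward closed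
      rintro k ⟨a, ha, b, hb, rfl⟩ y hyC hyk
      have hy0 := (memC hyC).1
      have ha0 := (memC (hAsub ha)).1
      have hau := (memC (hAsub ha)).2
      have hb0 := (memC (hJsub hb)).1
      have hbu := (memC (hJsub hb)).2
      have hyab : y ≤ a + b := le_trans hyk inf_le_left
      have hpA : y ⊓ a ∈ A := hAdc a ha _
        (Set.mem_Icc.mpr ⟨le_inf hy0 ha0, le_trans inf_le_right hau⟩) inf_le_right
      have hqJ : y ⊓ b ∈ J := hJdc b hb _
        (Set.mem_Icc.mpr ⟨le_inf hy0 hb0, le_trans inf_le_right hbu⟩) inf_le_right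
      have hpq0 : (y ⊓ a) ⊓ (y ⊓ b) = 0 :=
        le_antisymm (by
          calc (y ⊓ a) ⊓ (y ⊓ b) ≤ a ⊓ b := inf_le_inf inf_le_right inf_le_right
          _ = 0 := horth a ha b hb)
          (le_inf (le_inf hy0 ha0) (le_inf hy0 hb0))
      have hsum : (y ⊓ a) + (y ⊓ b) = y := by
        refine le_antisymm ?_ ?_
        · rw [orth_add_eq_sup' _ _ hpq0]
          exact sup_le inf_le_left inf_le_left
        · rw [add_inf, inf_add, inf_add]
          exact le_inf (le_inf (le_add_of_nonneg_left hy0) (le_add_of_nonneg_left ha0))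
            (le_inf (le_add_of_nonneg_right hb0) hyab)
      have : oplus u (y ⊓ a) (y ⊓ b) = y := by
        show ((y ⊓ a) + (y ⊓ b)) ⊓ u = y
        rw [hsum, inf_eq_left.mpr (memC hyC).2]
      exact this ▸ hmemK _ hpA _ hqJ
    · -- closed under ⊕
      rintro k₁ ⟨a₁, ha₁, b₁, hb₁, rfl⟩ k₂ ⟨a₂, ha₂, b₂, hb₂, rfl⟩
      have ha₁0 := (memC (hAsub ha₁)).1
      have ha₂0 := (memC (hAsub ha₂)).1
      have hb₁0 := (memC (hJsub hb₁)).1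
      have hb₂0 := (memC (hJsub hb₂)).1
      have hcomm : b₁ + a₂ = a₂ + b₁ :=
        orth_add_comm' b₁ a₂ (by rw [inf_comm]; exact horth a₂ ha₂ b₁ hb₁)
      have key : oplus u (oplus u a₁ b₁) (oplus u a₂ b₂)
          = oplus u (oplus u a₁ a₂) (oplus u b₁ b₂) := by
        show ((a₁ + b₁) ⊓ u + (a₂ + b₂) ⊓ u) ⊓ u
          = ((a₁ + a₂) ⊓ u + (b₁ + b₂) ⊓ u) ⊓ u
        rw [trunc_right' u _ (a₁ + b₁) (le_inf (add_nonneg ha₂0 hb₂0) hu0),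
          trunc_left' u _ (a₂ + b₂) (add_nonneg ha₁0 hb₁0),
          trunc_right' u _ (a₁ + a₂) (le_inf (add_nonneg hb₁0 hb₂0) hu0),
          trunc_left' u _ (b₁ + b₂) (add_nonneg ha₁0 ha₂0)]
        congr 1
        rw [add_assoc a₁ b₁, ← add_assoc b₁ a₂ b₂, hcomm, add_assoc a₂ b₁ b₂,
          ← add_assoc a₁ a₂ (b₁ + b₂)]
      rw [key]
      exact hmemK _ (hAop a₁ ha₁ a₂ ha₂) _ (hJop b₁ hb₁ b₂ hb₂)
  have hKnorm : IsNormalIdealIn u C K := by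
    refine ⟨hKideal, fun x hxC => ?_⟩
    have hx0 := (memC hxC).1
    ext z
    simp only [Set.mem_image]
    constructor
    · rintro ⟨k, ⟨a, ha, b, hb, rfl⟩, rfl⟩
      have ha0 := (memC (hAsub ha)).1
      have hb0 := (memC (hJsub hb)).1
      -- move x to the right using normality of A then J
      have hxa : oplus u x a ∈ (fun i => oplus u i x) '' A := by
        rw [← hAnorm x hxC]; exact ⟨a, ha, rfl⟩
      obtain ⟨a', ha', haeq⟩ := hxa
      have ha'0 := (memC (hAsub ha')).1
      have hxb : oplus u x b ∈ (fun i => oplus u i x) '' J := by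
        rw [← hJnorm x hxC]; exact ⟨b, hb, rfl⟩
      obtain ⟨b', hb', hbeq⟩ := hxb
      refine ⟨oplus u a' b', hmemK a' ha' b' hb', ?_⟩
      have h1 : (x + a) ⊓ u = (a' + x) ⊓ u := haeq.symm
      have h2 : (x + b) ⊓ u = (b' + x) ⊓ u := hbeq.symm
      show ((a' + b') ⊓ u + x) ⊓ u = (x + (a + b) ⊓ u) ⊓ u
      rw [trunc_right' u x (a' + b') hx0, trunc_left' u x (a + b) hx0]
      calc (a' + b' + x) ⊓ u = (a' + (b' + x)) ⊓ u := by rw [add_assoc]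
      _ = (a' + (b' + x) ⊓ u) ⊓ u := (trunc_left' u a' (b' + x) ha'0).symm
      _ = (a' + (x + b) ⊓ u) ⊓ u := by rw [← h2]
      _ = (a' + (x + b)) ⊓ u := trunc_left' u a' (x + b) ha'0
      _ = (a' + x + b) ⊓ u := by rw [← add_assoc]
      _ = ((a' + x) ⊓ u + b) ⊓ u := (trunc_right' u b (a' + x) hb0).symm
      _ = ((x + a) ⊓ u + b) ⊓ u := by rw [← h1]
      _ = (x + a + b) ⊓ u := trunc_right' u b (x + a) hb0
      _ = (x + (a + b)) ⊓ u := by rw [add_assoc]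
    · rintro ⟨k, ⟨a, ha, b, hb, rfl⟩, rfl⟩
      have ha0 := (memC (hAsub ha)).1
      have hb0 := (memC (hJsub hb)).1
      -- move x to the left using normality of J then A
      have hbx : oplus u b x ∈ (fun i => oplus u x i) '' J := by
        rw [hJnorm x hxC]; exact ⟨b, hb, rfl⟩
      obtain ⟨b', hb', hbeq⟩ := hbx
      have hb'0 := (memC (hJsub hb')).1
      have hax : oplus u a x ∈ (fun i => oplus u x i) '' A := by
        rw [hAnorm x hxC]; exact ⟨a, ha, rfl⟩
      obtain ⟨a', ha', haeq⟩ := hax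
      have ha'0 := (memC (hAsub ha')).1
      refine ⟨oplus u a' b', hmemK a' ha' b' hb', ?_⟩
      have h1 : (x + b') ⊓ u = (b + x) ⊓ u := hbeq
      have h2 : (x + a') ⊓ u = (a + x) ⊓ u := haeq
      show (x + (a' + b') ⊓ u) ⊓ u = ((a + b) ⊓ u + x) ⊓ u
      rw [trunc_left' u x (a' + b') hx0, trunc_right' u x (a + b) hx0]
      calc (x + (a' + b')) ⊓ u = (x + a' + b') ⊓ u := by rw [add_assoc]
      _ = ((x + a') ⊓ u + b') ⊓ u := (trunc_right' u b' (x + a') hb'0).symm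
      _ = ((a + x) ⊓ u + b') ⊓ u := by rw [h2]
      _ = (a + x + b') ⊓ u := trunc_right' u b' (a + x) hb'0
      _ = (a + (x + b')) ⊓ u := by rw [add_assoc]
      _ = (a + (x + b') ⊓ u) ⊓ u := (trunc_left' u a (x + b') ha0).symm
      _ = (a + (b + x) ⊓ u) ⊓ u := by rw [h1]
      _ = (a + (b + x)) ⊓ u := trunc_left' u a (b + x) ha0
      _ = (a + b + x) ⊓ u := by rw [← add_assoc]
  have hCK : C ⊆ K := by
    rw [← hgen]
    exact Set.sInter_subset_of_mem ⟨hKnorm, hAJK⟩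
  -- final assembly
  ext x
  constructor
  · intro hx
    have hxC := hIsub hx
    obtain ⟨a, ha, b, hb, hab⟩ := hCK hxC
    have ha0 := (memC (hAsub ha)).1
    have hau := (memC (hAsub ha)).2
    have hb0 := (memC (hJsub hb)).1
    have hbu := (memC (hJsub hb)).2
    have hax : a ≤ x := by
      rw [← hab]; exact le_inf (le_add_of_nonneg_right hb0) hau
    have hbx : b ≤ x := by
      rw [← hab]; exact le_inf (le_add_of_nonneg_left ha0) hbu
    have haI : a ∈ I := hIdc x hx a (hAsub ha) hax
    have hbI : b ∈ I := hIdc x hx b (hJsub hb) hbx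
    have hbP : b ∈ polarIn C A := by
      refine ⟨hJsub hb, fun a'' ha'' => ?_⟩
      rw [inf_comm]
      exact horth a'' ha'' b hb
    exact ⟨a, ⟨ha, haI⟩, b, ⟨hbI, hbP⟩, hab⟩
  · rintro ⟨a, ⟨-, haI⟩, b, ⟨hbI, -⟩, rfl⟩
    exact hIop a haI b hbI
end
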